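/- Let Δ = ℤⁿ ⋊_{−id} ℤ/2 and let s be a nonzero integer. Let H̄ ⊆ Δ be a subgroup with H̄ ∩ ℤⁿ ⊆ s·ℤⁿ. Then there exist a group homomorphism φ : Δ → Δ and a vector v ∈ ℝⁿ such that: (1) φ(x) = s·x for all x ∈ ℤⁿ and pr ∘ φ = pr, where pr : Δ → ℤ/2 is the canonical projection; (2) H̄ ⊆ im(φ); and (3) the affine map a : ℝⁿ → ℝⁿ, a(x) = s·x + v, is φ-equivariant, i.e., a(g · x) = φ(g) · a(x) for all g ∈ Δ and x ∈ ℝⁿ. -/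

import Mathlib

open Multiplicative

/-- The homomorphism `ℤ/r → G` sending the generator `1` of `ℤ/r` to a given element `g`
satisfying `g ^ r = 1` (and the trivial homomorphism if `g ^ r ≠ 1`). -/
noncomputable def zmodPowHom {G : Type*} [Group G] (r : ℕ) (g : G) :
    Multiplicative (ZMod r) →* G := by
  classical
  exact if h : g ^ (r : ℕ) = 1 then
    AddMonoidHom.toMultiplicativeLeft
      (ZMod.lift r ⟨(zmultiplesHom (Additive G)) (Additive.ofMul g), by
        show ((r : ℕ) : ℤ) • Additive.ofMul g = 0
        rw [← ofMul_zpow, zpow_natCast, h]; rfl⟩)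
  else 1

/-- The action of `ℤ/2` on `ℤⁿ` in which the nontrivial element acts by `-id`
(written multiplicatively: the nontrivial element acts by inversion). -/
noncomputable def negIdTwist (n : ℕ) :
    Multiplicative (ZMod 2) →* MulAut (Multiplicative (Fin n → ℤ)) :=
  zmodPowHom 2 (MulEquiv.inv (Multiplicative (Fin n → ℤ)))

/-- The group `Δ = ℤⁿ ⋊_{-id} ℤ/2`, with element `(w, ε)`, acts on `ℝⁿ` by affine motions:
`x ↦ ε(x) + w` where `ε ∈ ℤ/2` acts by `±id`. -/
noncomputable def negIdAffineAction (n : ℕ)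
    (g : Multiplicative (Fin n → ℤ) ⋊[negIdTwist n] Multiplicative (ZMod 2))
    (x : Fin n → ℝ) : Fin n → ℝ :=
  (if toAdd g.right = 0 then x else -x) + fun i => ((toAdd g.left) i : ℝ)

lemma twist_apply (n : ℕ) (ε : Multiplicative (ZMod 2)) (a : Multiplicative (Fin n → ℤ)) :
    negIdTwist n ε a = if toAdd ε = 0 then a else a⁻¹ := by
  have h2 : (MulEquiv.inv (Multiplicative (Fin n → ℤ))) ^ (2:ℕ) = 1 := by
    ext x; simp [pow_succ]
  have hk : toAdd ε = 0 ∨ toAdd ε = 1 := by revert ε; decide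
  rcases hk with h | h
  · have : ε = 1 := by rw [← ofAdd_toAdd ε, h]; rfl
    simp [this, h]
  · rw [if_neg (by simp [h])]
    have : ε = ofAdd 1 := by rw [← ofAdd_toAdd ε, h]
    subst this
    simp only [negIdTwist, zmodPowHom, dif_pos h2]
    rfl

noncomputable def phiAux (n : ℕ) (s : ℤ) (u : Fin n → ℤ) :
    (Multiplicative (Fin n → ℤ) ⋊[negIdTwist n] Multiplicative (ZMod 2)) →*
    (Multiplicative (Fin n → ℤ) ⋊[negIdTwist n] Multiplicative (ZMod 2)) where
  toFun g := ⟨ofAdd ((if toAdd g.right = 0 then 0 else u) + s • toAdd g.left), g.right⟩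
  map_one' := by
    ext <;> simp
  map_mul' g h := by
    have hgr : toAdd g.right = 0 ∨ toAdd g.right = 1 := by
      generalize g.right = ε; revert ε; decide
    have hhr : toAdd h.right = 0 ∨ toAdd h.right = 1 := by
      generalize h.right = ε; revert ε; decide
    ext
    · show toAdd _ = toAdd _
      simp only [SemidirectProduct.mul_left, SemidirectProduct.mul_right,
        twist_apply, toAdd_mul, toAdd_ofAdd]
      rcases hgr with h1 | h1 <;> rcases hhr with h2 | h2
      · simp [h1, h2, smul_add, toAdd_mul]
      · simp [h1, h2, smul_add, toAdd_mul]
        congr 2; simp only [← ofAdd_add, ← ofAdd_neg]; exact congrFun (congrArg ofAdd (by abel)) _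
      · simp [h1, h2, smul_add, toAdd_mul]
        congr 2; simp only [← ofAdd_add, ← ofAdd_neg]; exact congrFun (congrArg ofAdd (by abel)) _
      · simp [h1, h2, smul_add, toAdd_mul, show (1 : ZMod 2) + 1 = 0 from by decide]
        congr 2; simp only [← ofAdd_add, ← ofAdd_neg]; exact congrFun (congrArg ofAdd (by abel)) _
    · simp [SemidirectProduct.mul_right]

lemma phiAux_apply (n : ℕ) (s : ℤ) (u : Fin n → ℤ)
    (g : Multiplicative (Fin n → ℤ) ⋊[negIdTwist n] Multiplicative (ZMod 2)) :
    phiAux n s u g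
      = ⟨ofAdd ((if toAdd g.right = 0 then 0 else u) + s • toAdd g.left), g.right⟩ := rfl

/-- Let `Δ = ℤⁿ ⋊_{-id} ℤ/2` and let `s` be a nonzero integer.  Let
`H̄ ⊆ Δ` be a subgroup with `H̄ ∩ ℤⁿ ⊆ s·ℤⁿ`.  Then there exist a group homomorphism
`φ : Δ → Δ` and a vector `v ∈ ℝⁿ` such that:  (1) `φ(x) = s·x` for all `x ∈ ℤⁿ` and
`pr ∘ φ = pr` for the canonical projection `pr : Δ → ℤ/2`;  (2) `H̄ ⊆ im(φ)`; and
(3) the affine map `a(x) = s·x + v` is `φ`-equivariant, i.e. `a(g·x) = φ(g)·a(x)` for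
all `g ∈ Δ` and `x ∈ ℝⁿ`. -/
theorem exists_expansive_endo_of_semidirect_negId
    (n : ℕ) (s : ℤ) (hs : s ≠ 0)
    (Hbar : Subgroup (Multiplicative (Fin n → ℤ) ⋊[negIdTwist n] Multiplicative (ZMod 2)))
    (hHbar : ∀ w : Fin n → ℤ, SemidirectProduct.inl (ofAdd w) ∈ Hbar →
      ∃ y : Fin n → ℤ, w = s • y) :
    ∃ (φ : (Multiplicative (Fin n → ℤ) ⋊[negIdTwist n] Multiplicative (ZMod 2)) →*
          (Multiplicative (Fin n → ℤ) ⋊[negIdTwist n] Multiplicative (ZMod 2)))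
      (v : Fin n → ℝ),
      (∀ w : Fin n → ℤ,
        φ (SemidirectProduct.inl (ofAdd w)) = SemidirectProduct.inl (ofAdd (s • w))) ∧
      (∀ g, SemidirectProduct.rightHom (φ g) = SemidirectProduct.rightHom g) ∧
      Hbar ≤ φ.range ∧
      (∀ g x, (s : ℝ) • negIdAffineAction n g x + v
          = negIdAffineAction n (φ g) ((s : ℝ) • x + v)) := by
  classical
  obtain ⟨u, hu⟩ : ∃ u : Fin n → ℤ,
      ∀ g ∈ Hbar, toAdd g.right ≠ 0 → ∃ y : Fin n → ℤ, toAdd g.left = u + s • y := by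
    by_cases hex : ∃ g, g ∈ Hbar ∧ toAdd g.right ≠ 0
    · obtain ⟨g0, hg0H, hg0r⟩ := hex
      refine ⟨toAdd g0.left, fun g hg hgr => ?_⟩
      have hmem : g * g0 ∈ Hbar := mul_mem hg hg0H
      have hr : toAdd (g * g0).right = 0 := by
        have : ∀ a b : ZMod 2, a ≠ 0 → b ≠ 0 → a + b = 0 := by decide
        simpa [SemidirectProduct.mul_right] using this _ _ hgr hg0r
      have hgg0 : SemidirectProduct.inl (ofAdd (toAdd (g * g0).left)) = g * g0 := by
        ext
        · simp
        · simpa using hr.symm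
      obtain ⟨y, hy⟩ := hHbar _ (hgg0 ▸ hmem)
      have hleft : toAdd (g * g0).left = toAdd g.left - toAdd g0.left := by
        rw [SemidirectProduct.mul_left, twist_apply, if_neg hgr]
        simp [sub_eq_add_neg]
      refine ⟨y, ?_⟩
      rw [hleft] at hy
      rw [← hy]; abel
    · exact ⟨0, fun g hg hgr => absurd ⟨g, hg, hgr⟩ hex⟩
  refine ⟨phiAux n s u, fun i => (u i : ℝ) / 2, ?_, ?_, ?_, ?_⟩
  · intro w
    ext
    · simp [phiAux_apply]
    · simp [phiAux_apply]
  · intro g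
    simp [phiAux_apply, SemidirectProduct.rightHom]
  · intro g hg
    by_cases hgr : toAdd g.right = 0
    · have hgeq : SemidirectProduct.inl (ofAdd (toAdd g.left)) = g := by
        ext
        · simp
        · simpa using hgr.symm
      obtain ⟨y, hy⟩ := hHbar _ (hgeq ▸ hg)
      refine ⟨⟨ofAdd y, 1⟩, ?_⟩
      ext
      · simp [phiAux_apply, ← hy]
      · simpa [phiAux_apply] using hgr.symm
    · obtain ⟨y, hy⟩ := hu g hg hgr
      refine ⟨⟨ofAdd y, g.right⟩, ?_⟩
      ext
      · have h1 : (phiAux n s u ⟨ofAdd y, g.right⟩).left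
            = ofAdd ((if toAdd g.right = 0 then 0 else u) + s • y) := rfl
        rw [h1, if_neg hgr, ← ofAdd_toAdd g.left, hy]
      · simp [phiAux_apply]
  · intro g x
    funext i
    by_cases hgr : toAdd g.right = 0 <;>
      simp [negIdAffineAction, phiAux_apply, hgr] <;> push_cast <;> ring
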